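/- Let T=(V,E) be a finite tree with threshold function t:V→ℕ satisfying t(v) ≥ 1 for every vertex v. Then there exists a target vector s for T with cost exactly Σ_{v∈V} s(v) = Σ_{v∈V} t(v) − (|V| − 1). Consequently, any optimal (minimum-cost) target vector s* for T has cost C(s*) = Σ_{v∈V} t(v) − (|V| − 1) = |V| − 1 − Σ_{v∈V} (d(v) − t(v)). -/

import Mathlib

/-- `activeVec G t s ℓ` : the set of vertices active at round `ℓ` of the activation
process in `G` with thresholds `t`, starting with partial incentives `s`. -/
def activeVec {V : Type*} [Fintype V] [DecidableEq V] (G : SimpleGraph V) [DecidableRel G.Adj]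
    (t s : V → ℕ) : ℕ → Finset V
  | 0 => Finset.univ.filter fun v => t v ≤ s v
  | ℓ + 1 =>
    activeVec G t s ℓ ∪
      Finset.univ.filter fun u => t u - s u ≤ (G.neighborFinset u ∩ activeVec G t s ℓ).card

/-- `s` is a target vector for `G` (with thresholds `t`) if the activation process
starting with incentives `s` eventually activates the whole vertex set. -/
def isTargetVec {V : Type*} [Fintype V] [DecidableEq V] (G : SimpleGraph V) [DecidableRel G.Adj]
    (t s : V → ℕ) : Prop :=
  ∃ ℓ, activeVec G t s ℓ = Finset.univ

section Aux

open Finset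

variable {V : Type*} [Fintype V] [DecidableEq V] (G : SimpleGraph V) [DecidableRel G.Adj]
  (t s : V → ℕ)

lemma activeVec_mono {ℓ₁ ℓ₂ : ℕ} (h : ℓ₁ ≤ ℓ₂) :
    activeVec G t s ℓ₁ ⊆ activeVec G t s ℓ₂ := by
  induction h with
  | refl => exact subset_rfl
  | step _ ih => exact ih.trans (by rw [activeVec]; exact Finset.subset_union_left)

lemma reach_active (hc : G.Connected) (ht : ∀ v, 1 ≤ t v) (r : V) :
    ∀ n v, G.dist r v ≤ n →
      v ∈ activeVec G t (fun v => if v = r then t v else t v - 1) n := by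
  intro n
  induction n with
  | zero =>
    intro v hv
    have hrv : r = v := (hc.dist_eq_zero_iff).mp (Nat.le_zero.mp hv)
    subst hrv
    rw [activeVec]
    simp
  | succ n ih =>
    intro v hv
    rcases Nat.lt_succ_iff_lt_or_eq.mp (Nat.lt_succ_of_le hv) with h | h
    · exact (activeVec_mono G t _ (Nat.le_succ n)) (ih v (Nat.lt_succ_iff.mp h))
    · have hvr : v ≠ r := by
        intro hh; subst hh
        simp [SimpleGraph.dist_self] at h
      obtain ⟨p, hp⟩ := hc.exists_walk_length_eq_dist r v
      have hlen : p.reverse.length = n + 1 := by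
        rw [SimpleGraph.Walk.length_reverse, hp, h]
      cases hq : p.reverse with
      | nil => simp [hq] at hlen
      | @cons _ u _ hadj q =>
        have hqlen : q.length = n := by
          rw [hq] at hlen; simpa using hlen
        have hdu : G.dist r u ≤ n := by
          rw [SimpleGraph.dist_comm]
          exact hqlen ▸ SimpleGraph.dist_le q
        have hu : u ∈ activeVec G t (fun v => if v = r then t v else t v - 1) n :=
          ih u hdu
        rw [activeVec]
        refine Finset.mem_union_right _ (Finset.mem_filter.mpr ⟨Finset.mem_univ _, ?_⟩)
        have hsv : (if v = r then t v else t v - 1) = t v - 1 := by simp [hvr]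
        have h1 : t v - (t v - 1) = 1 := by have := ht v; omega
        rw [hsv, h1]
        have : u ∈ G.neighborFinset v ∩ activeVec G t (fun v => if v = r then t v else t v - 1) n :=
          Finset.mem_inter.mpr ⟨(G.mem_neighborFinset v u).mpr hadj, hu⟩
        exact Finset.card_pos.mpr ⟨u, this⟩

lemma sum_t_le_of_target (hs : isTargetVec G t s) :
    ∑ v, t v ≤ (∑ v, s v) + G.edgeFinset.card := by
  classical
  obtain ⟨L, hL⟩ := hs
  have hex : ∀ v, ∃ ℓ, v ∈ activeVec G t s ℓ := fun v => ⟨L, hL ▸ Finset.mem_univ v⟩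
  set ord : V → ℕ := fun v => Nat.find (hex v) with hord
  have hmem : ∀ v, v ∈ activeVec G t s (ord v) := fun v => Nat.find_spec (hex v)
  set f : V → Finset V :=
    fun v => G.neighborFinset v ∩ Finset.univ.filter (fun u => ord u < ord v) with hf
  have hA : ∀ v, t v ≤ s v + (f v).card := by
    intro v
    cases h : ord v with
    | zero =>
      have h0 := hmem v; rw [h, activeVec] at h0
      exact (Finset.mem_filter.mp h0).2.trans (Nat.le_add_right _ _)
    | succ ℓ =>
      have h1 := hmem v; rw [h, activeVec] at h1
      have h2 : v ∉ activeVec G t s ℓ := Nat.find_min (hex v) (show ℓ < ord v by omega)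
      rcases Finset.mem_union.mp h1 with h3 | h3
      · exact absurd h3 h2
      · have h4 : t v - s v ≤ (G.neighborFinset v ∩ activeVec G t s ℓ).card :=
          (Finset.mem_filter.mp h3).2
        have h5 : G.neighborFinset v ∩ activeVec G t s ℓ ⊆ f v := by
          intro u hu
          rcases Finset.mem_inter.mp hu with ⟨hu1, hu2⟩
          refine Finset.mem_inter.mpr ⟨hu1, Finset.mem_filter.mpr ⟨Finset.mem_univ _, ?_⟩⟩
          have : ord u ≤ ℓ := Nat.find_min' (hex u) hu2
          omega
        have h6 := h4.trans (Finset.card_le_card h5)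
        omega
  have hB : ∑ v, (f v).card ≤ G.edgeFinset.card := by
    rw [← Finset.card_sigma]
    apply Finset.card_le_card_of_injOn (s := Finset.univ.sigma f) (t := G.edgeFinset) (fun x : (Σ _ : V, V) => s(x.1, x.2))
    · rintro ⟨a, b⟩ hx
      rw [Finset.mem_coe, Finset.mem_sigma] at hx
      have hb : b ∈ f a := hx.2
      have hadj : G.Adj a b := (G.mem_neighborFinset a b).mp (Finset.mem_inter.mp hb).1
      exact SimpleGraph.mem_edgeFinset.mpr hadj
    · rintro ⟨a, b⟩ hx ⟨c, d⟩ hy hxy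
      rw [Finset.mem_coe, Finset.mem_sigma] at hx hy
      have hx2 : b ∈ f a := hx.2
      have hy2 : d ∈ f c := hy.2
      have hb : ord b < ord a :=
        (Finset.mem_filter.mp (Finset.mem_inter.mp hx2).2).2
      have hd : ord d < ord c :=
        (Finset.mem_filter.mp (Finset.mem_inter.mp hy2).2).2
      rcases Sym2.eq_iff.mp hxy with ⟨h1, h2⟩ | ⟨h1, h2⟩
      · have h1' : a = c := h1
        have h2' : b = d := h2
        subst h1'; subst h2'; rfl
      · have h1' : a = d := h1
        have h2' : b = c := h2
        subst h1'; subst h2'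
        exact absurd hd (by omega)
  calc ∑ v, t v ≤ ∑ v, (s v + (f v).card) := Finset.sum_le_sum fun v _ => hA v
    _ = (∑ v, s v) + ∑ v, (f v).card := Finset.sum_add_distrib
    _ ≤ (∑ v, s v) + G.edgeFinset.card := by omega

end Aux

/-- On a tree there is a target vector of cost exactly `∑ t(v) − (|V|−1)`, and this is
the minimum cost of a target vector (hence every optimal target vector has this cost);
moreover this value equals `|V| − 1 − ∑ (d(v) − t(v))`. -/
theorem tree_optimal_target_vector_cost {V : Type*} [Fintype V] [DecidableEq V]
    (T : SimpleGraph V) [DecidableRel T.Adj] (hT : T.IsTree)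
    (t : V → ℕ) (ht : ∀ v, 1 ≤ t v) :
    IsLeast {c : ℤ | ∃ s : V → ℕ, isTargetVec T t s ∧ c = ∑ v : V, (s v : ℤ)}
      ((∑ v : V, (t v : ℤ)) - ((Fintype.card V : ℤ) - 1)) ∧
    (∑ v : V, (t v : ℤ)) - ((Fintype.card V : ℤ) - 1) =
      (Fintype.card V : ℤ) - 1 - ∑ v : V, ((T.degree v : ℤ) - (t v : ℤ)) := by
  classical
  have hc : T.Connected := hT.isConnected
  have hne : Nonempty V := hc.nonempty
  obtain ⟨r⟩ := hne
  have hedge : T.edgeFinset.card + 1 = Fintype.card V := hT.card_edgeFinset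
  have hE : (T.edgeFinset.card : ℤ) = (Fintype.card V : ℤ) - 1 := by
    have : ((T.edgeFinset.card + 1 : ℕ) : ℤ) = (Fintype.card V : ℤ) := by exact_mod_cast hedge
    push_cast at this
    linarith
  refine ⟨⟨?_, ?_⟩, ?_⟩
  · -- membership: the explicit target vector
    refine ⟨fun v => if v = r then t v else t v - 1, ⟨Finset.univ.sup (T.dist r), ?_⟩, ?_⟩
    · apply Finset.eq_univ_iff_forall.mpr
      intro v
      exact reach_active T t hc ht r _ v (Finset.le_sup (Finset.mem_univ v))
    · have hcast : ∀ v : V, ((if v = r then t v else t v - 1 : ℕ) : ℤ) =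
          (t v : ℤ) - 1 + (if v = r then 1 else 0) := by
        intro v
        split
        · ring
        · rw [Nat.cast_sub (ht v)]; push_cast; ring
      rw [Finset.sum_congr rfl (fun v _ => hcast v), Finset.sum_add_distrib,
        Finset.sum_sub_distrib]
      simp [Finset.sum_ite_eq', Finset.card_univ]
      ring
  · -- lower bound
    rintro c ⟨s, hs, rfl⟩
    have h1 := sum_t_le_of_target T t s hs
    have h2 : (∑ v, (t v : ℤ)) ≤ (∑ v, (s v : ℤ)) + (T.edgeFinset.card : ℤ) := by
      exact_mod_cast h1
    linarith
  · -- the identity with degrees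
    have hdeg : ∑ v, T.degree v = 2 * T.edgeFinset.card := T.sum_degrees_eq_twice_card_edges
    have hdeg' : ∑ v, (T.degree v : ℤ) = 2 * (T.edgeFinset.card : ℤ) := by exact_mod_cast hdeg
    rw [Finset.sum_sub_distrib]
    linarith
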